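/- Let 0 < α < 1 and n ≥ 1. Let U be an upset in the nonempty subsets of [n] (i.e. U is a nonempty collection of nonempty subsets such that I ∈ U and I ⊆ J imply J ∈ U), and let L be the set of minimal elements of U. Then for every s > 0 there exist finite types X₁,…,Xₙ and a probability distribution P on X₁ × ⋯ × Xₙ such that s ≤ H_α(P_I) ≤ s + (log₂|L| + 1)/(1−α) for every I ∈ U, and H_α(P_I) ≤ log₂|L| + 1 for every nonempty I ⊆ [n] with I ∉ U. -/

import Mathlib

noncomputable section

/-- A probability distribution on a finite type. -/
def IsProbDist {X : Type*} [Fintype X] (P : X → ℝ) : Prop :=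
  (∀ x, 0 ≤ P x) ∧ ∑ x, P x = 1

/-- Marginal of a distribution on a finite product, on the coordinates in `I`. -/
def marginal {n : ℕ} {X : Fin n → Type*} [∀ i, Fintype (X i)]
    (P : (∀ i, X i) → ℝ) (I : Finset (Fin n)) :
    (∀ i : {i : Fin n // i ∈ I}, X i.1) → ℝ :=
  fun x => ∑ y : ∀ j : {j : Fin n // j ∉ I}, X j.1,
    P (fun i => if h : i ∈ I then x ⟨i, h⟩ else y ⟨i, h⟩)

/-- Rényi α-entropy (base 2) of a distribution. -/
def renyiH {X : Type*} [Fintype X] (α : ℝ) (P : X → ℝ) : ℝ :=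
  (1 / (1 - α)) * Real.logb 2 (∑ x, P x ^ α)

open Finset

lemma myaux_sum_pi_prod {ι : Type*} [Fintype ι] [DecidableEq ι] {κ : ι → Type*}
    [∀ i, Fintype (κ i)] (f : ∀ i, κ i → ℝ) :
    ∑ x : ∀ i, κ i, ∏ i, f i (x i) = ∏ i, ∑ t, f i t :=
  (Fintype.prod_sum f).symm

lemma myaux_rpow_add_le {x y p : ℝ} (hx : 0 ≤ x) (hy : 0 ≤ y) (hp : 0 ≤ p) (hp1 : p ≤ 1) :
    (x + y) ^ p ≤ x ^ p + y ^ p := by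
  have h := NNReal.rpow_add_le_add_rpow (⟨x, hx⟩ : NNReal) (⟨y, hy⟩ : NNReal) hp hp1
  have h2 := NNReal.coe_le_coe.2 h
  push_cast at h2
  convert h2 using 2
  all_goals rfl

lemma myaux_rpow_sum_le {κ : Type*} (s : Finset κ) (f : κ → ℝ) (hf : ∀ i ∈ s, 0 ≤ f i)
    {p : ℝ} (hp0 : 0 < p) (hp1 : p ≤ 1) :
    (∑ i ∈ s, f i) ^ p ≤ ∑ i ∈ s, f i ^ p := by
  induction s using Finset.cons_induction with
  | empty => simp [Real.zero_rpow hp0.ne']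
  | cons a s ha ih =>
    rw [Finset.sum_cons, Finset.sum_cons]
    have hfa : 0 ≤ f a := hf a (Finset.mem_cons_self a s)
    have hsum : 0 ≤ ∑ i ∈ s, f i := Finset.sum_nonneg fun i hi => hf i (Finset.mem_cons_of_mem hi)
    calc (f a + ∑ i ∈ s, f i) ^ p ≤ f a ^ p + (∑ i ∈ s, f i) ^ p :=
          myaux_rpow_add_le hfa hsum hp0.le hp1
      _ ≤ f a ^ p + ∑ i ∈ s, f i ^ p := by
          gcongr
          exact ih fun i hi => hf i (Finset.mem_cons_of_mem hi)

lemma myaux_glue_sum {n M : ℕ} (I : Finset (Fin n)) (h : Fin n → Fin M → ℝ)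
    (hnorm : ∀ i, ∑ t, h i t = 1) (y : ∀ i : {i : Fin n // i ∈ I}, Fin M) :
    ∑ z : ∀ j : {j : Fin n // j ∉ I}, Fin M,
      (∏ i : Fin n, h i (if hh : i ∈ I then y ⟨i, hh⟩ else z ⟨i, hh⟩))
      = ∏ i : {i : Fin n // i ∈ I}, h i.1 (y i) := by
  have key : ∀ z : ∀ j : {j : Fin n // j ∉ I}, Fin M,
      (∏ i : Fin n, h i (if hh : i ∈ I then y ⟨i, hh⟩ else z ⟨i, hh⟩))
      = (∏ i : {i : Fin n // i ∈ I}, h i.1 (y i)) *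
        ∏ j : {j : Fin n // ¬ j ∈ I}, h j.1 (z j) := by
    intro z
    rw [← Fintype.prod_subtype_mul_prod_subtype (fun i : Fin n => i ∈ I)
      (fun i => h i (if hh : i ∈ I then y ⟨i, hh⟩ else z ⟨i, hh⟩))]
    congr 1
    · exact Finset.prod_congr (Finset.ext fun x => by simp) fun i _ => by rw [dif_pos i.2]
    · exact Finset.prod_congr (Finset.ext fun x => by simp) fun j _ => by rw [dif_neg j.2]
  simp_rw [key]
  rw [← Finset.mul_sum]
  rw [myaux_sum_pi_prod (f := fun (j : {j : Fin n // ¬ j ∈ I}) (t : Fin M) => h j.1 t)]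
  simp [hnorm]

set_option maxHeartbeats 2000000 in
/-- Theorem 3: for `0 < α < 1` and any upset `U` of nonempty subsets of `[n]`
with minimal elements `L`, the vector `s·𝟙_U` is attained up to an additive
constant depending only on `|L|`. -/
theorem renyi_upset_classical_alpha_lt_one (α : ℝ) (hα0 : 0 < α) (hα1 : α < 1)
    (n : ℕ) (hn : 1 ≤ n)
    (U : Finset (Finset (Fin n))) (hUne : U.Nonempty)
    (hUnonempty : ∀ I ∈ U, I.Nonempty)
    (hUup : ∀ I ∈ U, ∀ J : Finset (Fin n), I ⊆ J → J ∈ U)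
    (L : Finset (Finset (Fin n)))
    (hL : ∀ I, I ∈ L ↔ I ∈ U ∧ ∀ J ∈ U, J ⊆ I → J = I)
    (s : ℝ) (hs : 0 < s) :
    ∃ (d : Fin n → ℕ) (P : (∀ i, Fin (d i)) → ℝ),
      IsProbDist P ∧
      (∀ I ∈ U, s ≤ renyiH α (marginal P I) ∧
        renyiH α (marginal P I) ≤ s + (Real.logb 2 L.card + 1) / (1 - α)) ∧
      ∀ I : Finset (Fin n), I.Nonempty → I ∉ U →
        renyiH α (marginal P I) ≤ Real.logb 2 L.card + 1 := by
  have h1α : (0:ℝ) < 1 - α := by linarith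
  -- minimal elements
  have hmin : ∀ I ∈ U, ∃ J ∈ L, J ⊆ I := by
    intro I hI
    obtain ⟨J0, hJ0mem, hJ0min⟩ := Finset.exists_min_image (U.filter (· ⊆ I))
      (fun J => J.card) ⟨I, by simp [hI]⟩
    rw [Finset.mem_filter] at hJ0mem
    refine ⟨J0, ?_, hJ0mem.2⟩
    rw [hL]
    refine ⟨hJ0mem.1, fun K hK hKsub => ?_⟩
    refine Finset.eq_of_subset_of_card_le hKsub ?_
    exact hJ0min K (Finset.mem_filter.2 ⟨hK, hKsub.trans hJ0mem.2⟩)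
  have hLne : L.Nonempty := by
    obtain ⟨I, hI⟩ := hUne
    obtain ⟨J, hJ, _⟩ := hmin I hI
    exact ⟨J, hJ⟩
  have hLU : ∀ J ∈ L, J ∈ U := fun J hJ => ((hL J).1 hJ).1
  have hLcard : ∀ J ∈ L, 1 ≤ J.card :=
    fun J hJ => Finset.card_pos.2 (hUnonempty J (hLU J hJ))
  obtain ⟨mR, hmR⟩ : ∃ x : ℝ, x = (L.card : ℝ) := ⟨_, rfl⟩
  have hm1 : (1:ℝ) ≤ mR := by
    have h : 1 ≤ L.card := hLne.card_pos
    rw [hmR]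
    exact_mod_cast h
  have hm0 : (0:ℝ) < mR := lt_of_lt_of_le one_pos hm1
  -- parameters
  obtain ⟨c, hcdef⟩ : ∃ x : ℝ, x = 2 ^ (1 - α) - 1 := ⟨_, rfl⟩
  have hc0 : 0 < c := by
    have h2 : (2:ℝ) ^ (0:ℝ) < 2 ^ (1 - α) :=
      Real.rpow_lt_rpow_of_exponent_lt one_lt_two h1α
    rw [Real.rpow_zero] at h2
    simp only [hcdef]; linarith
  have hc1 : c ≤ 1 := by
    have h2 : (2:ℝ) ^ (1 - α) ≤ 2 ^ (1:ℝ) :=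
      Real.rpow_le_rpow_of_exponent_le one_le_two (by linarith)
    rw [Real.rpow_one] at h2
    simp only [hcdef]; linarith
  obtain ⟨V, hVdef⟩ : ∃ x : ℝ, x = 2 ^ ((1 - α) * s) * mR ^ α := ⟨_, rfl⟩
  have hV0 : 0 < V := by rw [hVdef]; positivity
  have hV1 : 1 ≤ V := by
    rw [hVdef]
    have h1 : (1:ℝ) ≤ 2 ^ ((1 - α) * s) := by
      calc (1:ℝ) = 2 ^ (0:ℝ) := by norm_num
        _ ≤ 2 ^ ((1 - α) * s) :=
          Real.rpow_le_rpow_of_exponent_le one_le_two (mul_nonneg h1α.le hs.le)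
    have h2 : (1:ℝ) ≤ mR ^ α := by
      calc (1:ℝ) = 1 ^ α := by simp
        _ ≤ mR ^ α := Real.rpow_le_rpow zero_le_one hm1 hα0.le
    calc (1:ℝ) = 1 * 1 := by ring
      _ ≤ 2 ^ ((1 - α) * s) * mR ^ α := by nlinarith
  obtain ⟨M, hMdef⟩ : ∃ x : ℕ, x = max 1 ⌈(V / c) ^ (1 - α)⁻¹⌉₊ := ⟨_, rfl⟩
  have hM1 : 1 ≤ M := hMdef ▸ le_max_left _ _
  have hMR1 : (1:ℝ) ≤ (M:ℝ) := by exact_mod_cast hM1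
  have hMR0 : (0:ℝ) < (M:ℝ) := lt_of_lt_of_le one_pos hMR1
  have hMpow0 : (0:ℝ) < (M:ℝ) ^ (1 - α) := Real.rpow_pos_of_pos hMR0 _
  have hMpow : V / c ≤ (M:ℝ) ^ (1 - α) := by
    have h1 : ((V / c) ^ (1 - α)⁻¹ : ℝ) ≤ (M:ℝ) := by
      refine le_trans (Nat.le_ceil _) ?_
      rw [hMdef]
      exact_mod_cast le_max_right 1 ⌈(V / c) ^ (1 - α)⁻¹⌉₊
    have h2 : (((V / c) ^ (1 - α)⁻¹) ^ (1 - α) : ℝ) ≤ (M:ℝ) ^ (1 - α) :=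
      Real.rpow_le_rpow (Real.rpow_nonneg (by positivity) _) h1 h1α.le
    rwa [← Real.rpow_mul (by positivity), inv_mul_cancel₀ h1α.ne', Real.rpow_one] at h2
  obtain ⟨ε, hεdef⟩ : ∃ x : ℝ, x = V * ((M:ℝ) ^ (1 - α))⁻¹ := ⟨_, rfl⟩
  have hε0 : 0 < ε := by
    rw [hεdef]; positivity
  have hεc : ε ≤ c := by
    rw [hεdef, mul_inv_le_iff₀ hMpow0]
    calc V = (V / c) * c := by field_simp
      _ ≤ (M:ℝ) ^ (1 - α) * c := by gcongr
      _ = c * (M:ℝ) ^ (1 - α) := by ring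
  have hε1 : ε ≤ 1 := hεc.trans hc1
  have hεM : ε * (M:ℝ) ^ (1 - α) = V := by
    rw [hεdef]; field_simp
  obtain ⟨δ, hδdef⟩ : ∃ x : Finset (Fin n) → ℝ,
      x = fun J => ε ^ α⁻¹ * (M:ℝ) ^ (((1:ℝ) - (J.card:ℝ)) * (1 - α) / α) := ⟨_, rfl⟩
  have hδ0 : ∀ J, 0 < δ J := fun J => by
    rw [hδdef]
    exact mul_pos (Real.rpow_pos_of_pos hε0 _) (Real.rpow_pos_of_pos hMR0 _)
  have hδ1 : ∀ J, 1 ≤ J.card → δ J ≤ 1 := by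
    intro J hJc
    have h1 : ε ^ α⁻¹ ≤ 1 := Real.rpow_le_one hε0.le hε1 (by positivity)
    have h2 : (M:ℝ) ^ (((1:ℝ) - (J.card:ℝ)) * (1 - α) / α) ≤ 1 := by
      apply Real.rpow_le_one_of_one_le_of_nonpos hMR1
      have : ((1:ℝ) - (J.card:ℝ)) ≤ 0 := by
        have : (1:ℝ) ≤ (J.card:ℝ) := by exact_mod_cast hJc
        linarith
      have hfrac : 0 ≤ (1 - α) / α := by positivity
      calc ((1:ℝ) - (J.card:ℝ)) * (1 - α) / α
          = ((1:ℝ) - (J.card:ℝ)) * ((1 - α) / α) := by ring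
        _ ≤ 0 := mul_nonpos_of_nonpos_of_nonneg this hfrac
    have h3 := (Real.rpow_pos_of_pos hMR0 (((1:ℝ) - (J.card:ℝ)) * (1 - α) / α)).le
    have h4 := (Real.rpow_pos_of_pos hε0 α⁻¹).le
    simp only [hδdef]
    nlinarith
  have hkey : ∀ (J : Finset (Fin n)) (k : ℕ),
      (δ J) ^ α * (M:ℝ) ^ ((1 - α) * (k:ℝ))
        = ε * (M:ℝ) ^ ((1 - α) * ((k:ℝ) - (J.card:ℝ) + 1)) := by
    intro J k
    rw [hδdef]
    rw [Real.mul_rpow (Real.rpow_nonneg hε0.le _) (Real.rpow_nonneg hMR0.le _)]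
    rw [← Real.rpow_mul hε0.le, inv_mul_cancel₀ hα0.ne', Real.rpow_one]
    rw [← Real.rpow_mul hMR0.le]
    rw [mul_assoc, ← Real.rpow_add hMR0]
    congr 1
    field_simp
    ring
  have hδV : ∀ (J : Finset (Fin n)) (k : ℕ), k ≤ J.card →
      (δ J) ^ α * (M:ℝ) ^ ((1 - α) * (k:ℝ)) ≤ V := by
    intro J k hk
    rw [hkey J k]
    have h2 : (M:ℝ) ^ ((1 - α) * ((k:ℝ) - (J.card:ℝ) + 1)) ≤ (M:ℝ) ^ (1 - α) := by
      apply Real.rpow_le_rpow_of_exponent_le hMR1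
      have hkc : (k:ℝ) ≤ (J.card:ℝ) := by exact_mod_cast hk
      nlinarith
    calc ε * (M:ℝ) ^ ((1 - α) * ((k:ℝ) - (J.card:ℝ) + 1)) ≤ ε * (M:ℝ) ^ (1 - α) :=
          mul_le_mul_of_nonneg_left h2 hε0.le
      _ = V := hεM
  have hδε : ∀ (J : Finset (Fin n)) (k : ℕ), k + 1 ≤ J.card →
      (δ J) ^ α * (M:ℝ) ^ ((1 - α) * (k:ℝ)) ≤ ε := by
    intro J k hk
    rw [hkey J k]
    have h2 : (M:ℝ) ^ ((1 - α) * ((k:ℝ) - (J.card:ℝ) + 1)) ≤ 1 := by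
      apply Real.rpow_le_one_of_one_le_of_nonpos hMR1
      have hkc : (k:ℝ) + 1 ≤ (J.card:ℝ) := by exact_mod_cast hk
      nlinarith
    calc ε * (M:ℝ) ^ ((1 - α) * ((k:ℝ) - (J.card:ℝ) + 1)) ≤ ε * 1 :=
          mul_le_mul_of_nonneg_left h2 hε0.le
      _ = ε := mul_one ε
  haveI : NeZero M := ⟨by omega⟩
  obtain ⟨g, hgdef⟩ : ∃ x : Finset (Fin n) → Fin n → Fin M → ℝ,
      x = fun S i t => if i ∈ S then (M:ℝ)⁻¹ else if t = 0 then 1 else 0 := ⟨_, rfl⟩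
  have hg0 : ∀ S i t, 0 ≤ g S i t := by
    intro S i t
    simp only [hgdef]
    split_ifs <;> positivity
  have hgsum : ∀ S i, ∑ t, g S i t = 1 := by
    intro S i
    simp only [hgdef]
    by_cases h : i ∈ S
    · simp only [h, if_true]
      rw [Finset.sum_const, Finset.card_univ, Fintype.card_fin, nsmul_eq_mul]
      field_simp
    · simp only [h, if_false]
      rw [Finset.sum_ite_eq' Finset.univ (0 : Fin M) (fun _ => (1:ℝ))]
      simp
  have hgpow : ∀ S i, ∑ t, (g S i t) ^ α = if i ∈ S then (M:ℝ) ^ (1 - α) else 1 := by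
    intro S i
    simp only [hgdef]
    by_cases h : i ∈ S
    · simp only [h, if_true]
      rw [Finset.sum_const, Finset.card_univ, Fintype.card_fin, nsmul_eq_mul]
      rw [Real.inv_rpow hMR0.le, Real.rpow_sub hMR0, Real.rpow_one, div_eq_mul_inv]
    · simp only [h, if_false]
      have hite : ∀ t : Fin M, ((if t = 0 then (1:ℝ) else 0)) ^ α = if t = 0 then 1 else 0 := by
        intro t; split_ifs <;> simp [Real.zero_rpow hα0.ne']
      simp_rw [hite]
      rw [Finset.sum_ite_eq' Finset.univ (0 : Fin M) (fun _ => (1:ℝ))]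
      simp
  -- the distribution
  obtain ⟨Pd, hPdef⟩ : ∃ x : (∀ _ : Fin n, Fin M) → ℝ,
      x = fun x => mR⁻¹ * ∑ J ∈ L, ((1 - δ J) * ∏ i, g ∅ i (x i) + δ J * ∏ i, g J i (x i))
      := ⟨_, rfl⟩
  have hPnn : ∀ x, 0 ≤ Pd x := by
    intro x
    simp only [hPdef]
    apply mul_nonneg (inv_nonneg.2 hm0.le)
    apply Finset.sum_nonneg
    intro J hJ
    have h1 : (0:ℝ) ≤ 1 - δ J := by
      have := hδ1 J (hLcard J hJ); linarith
    have h2 : (0:ℝ) ≤ ∏ i, g ∅ i (x i) := Finset.prod_nonneg fun i _ => hg0 ∅ i (x i)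
    have h3 : (0:ℝ) ≤ ∏ i, g J i (x i) := Finset.prod_nonneg fun i _ => hg0 J i (x i)
    have := (hδ0 J).le
    positivity
  have hPsum : ∑ x, Pd x = 1 := by
    simp only [hPdef]
    rw [← Finset.mul_sum, Finset.sum_comm]
    have hJ1 : ∀ J ∈ L, ∑ x : (∀ _ : Fin n, Fin M),
        ((1 - δ J) * ∏ i, g ∅ i (x i) + δ J * ∏ i, g J i (x i)) = 1 := by
      intro J _
      rw [Finset.sum_add_distrib, ← Finset.mul_sum, ← Finset.mul_sum,
        myaux_sum_pi_prod (f := fun i t => g ∅ i t),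
        myaux_sum_pi_prod (f := fun i t => g J i t)]
      simp only [hgsum]
      simp
    rw [Finset.sum_congr rfl hJ1, Finset.sum_const, nsmul_eq_mul, mul_one, ← hmR]
    exact inv_mul_cancel₀ hm0.ne'
  -- marginal formula
  have hmarg : ∀ (I : Finset (Fin n)) (y : ∀ i : {i : Fin n // i ∈ I}, Fin M),
      marginal Pd I y = mR⁻¹ * ∑ J ∈ L,
        ((1 - δ J) * (∏ i : {i : Fin n // i ∈ I}, g ∅ i.1 (y i)) +
         δ J * ∏ i : {i : Fin n // i ∈ I}, g J i.1 (y i)) := by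
    intro I y
    simp only [marginal, hPdef]
    rw [← Finset.mul_sum]
    congr 1
    rw [Finset.sum_comm]
    refine Finset.sum_congr rfl fun J _ => ?_
    rw [Finset.sum_add_distrib, ← Finset.mul_sum, ← Finset.mul_sum,
      myaux_glue_sum I (g ∅) (hgsum ∅) y, myaux_glue_sum I (g J) (hgsum J) y]
  -- sums of powers of product kernels
  have hRsum : ∀ (I S : Finset (Fin n)),
      ∑ y : ∀ i : {i : Fin n // i ∈ I}, Fin M,
        (∏ i : {i : Fin n // i ∈ I}, g S i.1 (y i)) ^ α
        = (M:ℝ) ^ ((1 - α) * (((I ∩ S).card : ℕ) : ℝ)) := by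
    intro I S
    have h1 : ∀ y : ∀ i : {i : Fin n // i ∈ I}, Fin M,
        (∏ i : {i : Fin n // i ∈ I}, g S i.1 (y i)) ^ α
          = ∏ i : {i : Fin n // i ∈ I}, (g S i.1 (y i)) ^ α := by
      intro y
      rw [← Real.finset_prod_rpow _ _ (fun i _ => hg0 S i.1 (y i)) α]
    simp_rw [h1]
    rw [myaux_sum_pi_prod (f := fun (i : {i : Fin n // i ∈ I}) (t : Fin M) => (g S i.1 t) ^ α)]
    simp_rw [hgpow]
    rw [Finset.univ_eq_attach,
      Finset.prod_attach I (fun i => if i ∈ S then (M:ℝ) ^ (1 - α) else 1),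
      Finset.prod_ite_mem I S (fun _ => (M:ℝ) ^ (1 - α)), Finset.prod_const,
      ← Real.rpow_natCast ((M:ℝ) ^ (1 - α)) ((I ∩ S).card), ← Real.rpow_mul hMR0.le]
  -- upper bound on the power sum
  have hTub : ∀ I : Finset (Fin n),
      ∑ y, marginal Pd I y ^ α
        ≤ mR⁻¹ ^ α * ∑ J ∈ L, (1 + (δ J) ^ α * (M:ℝ) ^ ((1 - α) * (((I ∩ J).card : ℕ) : ℝ))) := by
    intro I
    have hRnn : ∀ (S : Finset (Fin n)) (y : ∀ i : {i : Fin n // i ∈ I}, Fin M),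
        (0:ℝ) ≤ ∏ i : {i : Fin n // i ∈ I}, g S i.1 (y i) :=
      fun S y => Finset.prod_nonneg fun i _ => hg0 S i.1 (y i)
    have hunn : ∀ (J : Finset (Fin n)), J ∈ L → ∀ y : ∀ i : {i : Fin n // i ∈ I}, Fin M,
        (0:ℝ) ≤ (1 - δ J) * (∏ i : {i : Fin n // i ∈ I}, g ∅ i.1 (y i)) +
          δ J * ∏ i : {i : Fin n // i ∈ I}, g J i.1 (y i) := by
      intro J hJ y
      have h1 : (0:ℝ) ≤ 1 - δ J := by have := hδ1 J (hLcard J hJ); linarith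
      exact add_nonneg (mul_nonneg h1 (hRnn ∅ y)) (mul_nonneg (hδ0 J).le (hRnn J y))
    have hstep : ∀ y, marginal Pd I y ^ α
        ≤ mR⁻¹ ^ α * ∑ J ∈ L,
            ((1 - δ J) ^ α * (∏ i : {i : Fin n // i ∈ I}, g ∅ i.1 (y i)) ^ α
              + (δ J) ^ α * (∏ i : {i : Fin n // i ∈ I}, g J i.1 (y i)) ^ α) := by
      intro y
      rw [hmarg I y]
      rw [Real.mul_rpow (inv_nonneg.2 hm0.le)
        (Finset.sum_nonneg fun J hJ => hunn J hJ y)]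
      apply mul_le_mul_of_nonneg_left _ (Real.rpow_nonneg (inv_nonneg.2 hm0.le) α)
      calc (∑ J ∈ L, ((1 - δ J) * (∏ i : {i : Fin n // i ∈ I}, g ∅ i.1 (y i)) +
              δ J * ∏ i : {i : Fin n // i ∈ I}, g J i.1 (y i))) ^ α
          ≤ ∑ J ∈ L, ((1 - δ J) * (∏ i : {i : Fin n // i ∈ I}, g ∅ i.1 (y i)) +
              δ J * ∏ i : {i : Fin n // i ∈ I}, g J i.1 (y i)) ^ α :=
            myaux_rpow_sum_le L _ (fun J hJ => hunn J hJ y) hα0 hα1.le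
        _ ≤ _ := by
            apply Finset.sum_le_sum
            intro J hJ
            have h1 : (0:ℝ) ≤ 1 - δ J := by have := hδ1 J (hLcard J hJ); linarith
            calc ((1 - δ J) * (∏ i : {i : Fin n // i ∈ I}, g ∅ i.1 (y i)) +
                    δ J * ∏ i : {i : Fin n // i ∈ I}, g J i.1 (y i)) ^ α
                ≤ ((1 - δ J) * ∏ i : {i : Fin n // i ∈ I}, g ∅ i.1 (y i)) ^ α +
                  (δ J * ∏ i : {i : Fin n // i ∈ I}, g J i.1 (y i)) ^ α :=
                  myaux_rpow_add_le (mul_nonneg h1 (hRnn ∅ y))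
                    (mul_nonneg (hδ0 J).le (hRnn J y)) hα0.le hα1.le
              _ = (1 - δ J) ^ α * (∏ i : {i : Fin n // i ∈ I}, g ∅ i.1 (y i)) ^ α +
                  (δ J) ^ α * (∏ i : {i : Fin n // i ∈ I}, g J i.1 (y i)) ^ α := by
                  rw [Real.mul_rpow h1 (hRnn ∅ y), Real.mul_rpow (hδ0 J).le (hRnn J y)]
    calc ∑ y, marginal Pd I y ^ α
        ≤ ∑ y : ∀ i : {i : Fin n // i ∈ I}, Fin M, (mR⁻¹ ^ α * ∑ J ∈ L,
            ((1 - δ J) ^ α * (∏ i : {i : Fin n // i ∈ I}, g ∅ i.1 (y i)) ^ α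
              + (δ J) ^ α * (∏ i : {i : Fin n // i ∈ I}, g J i.1 (y i)) ^ α)) :=
          Finset.sum_le_sum fun y _ => hstep y
      _ = mR⁻¹ ^ α * ∑ J ∈ L,
            ((1 - δ J) ^ α * (M:ℝ) ^ ((1 - α) * (((I ∩ ∅).card : ℕ) : ℝ))
              + (δ J) ^ α * (M:ℝ) ^ ((1 - α) * (((I ∩ J).card : ℕ) : ℝ))) := by
          rw [← Finset.mul_sum]
          congr 1
          rw [Finset.sum_comm]
          refine Finset.sum_congr rfl fun J _ => ?_
          rw [Finset.sum_add_distrib, ← Finset.mul_sum, ← Finset.mul_sum,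
            hRsum I ∅, hRsum I J]
      _ ≤ mR⁻¹ ^ α * ∑ J ∈ L,
            (1 + (δ J) ^ α * (M:ℝ) ^ ((1 - α) * (((I ∩ J).card : ℕ) : ℝ))) := by
          apply mul_le_mul_of_nonneg_left _ (Real.rpow_nonneg (inv_nonneg.2 hm0.le) α)
          apply Finset.sum_le_sum
          intro J hJ
          have h1 : (0:ℝ) ≤ 1 - δ J := by have := hδ1 J (hLcard J hJ); linarith
          have h2 : (1 - δ J) ^ α ≤ 1 := Real.rpow_le_one h1 (by nlinarith [(hδ0 J).le]) hα0.le
          have h3 : (I ∩ ∅ : Finset (Fin n)) = ∅ := Finset.inter_empty I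
          rw [h3]
          simp only [Finset.card_empty, Nat.cast_zero, mul_zero, Real.rpow_zero, mul_one]
          linarith
  -- lower bound on the power sum
  have hTlb : ∀ (I J' : Finset (Fin n)), J' ∈ L →
      mR⁻¹ ^ α * ((δ J') ^ α * (M:ℝ) ^ ((1 - α) * (((I ∩ J').card : ℕ) : ℝ)))
        ≤ ∑ y, marginal Pd I y ^ α := by
    intro I J' hJ'
    have hRnn : ∀ (S : Finset (Fin n)) (y : ∀ i : {i : Fin n // i ∈ I}, Fin M),
        (0:ℝ) ≤ ∏ i : {i : Fin n // i ∈ I}, g S i.1 (y i) :=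
      fun S y => Finset.prod_nonneg fun i _ => hg0 S i.1 (y i)
    have hstep : ∀ y, mR⁻¹ * (δ J' * ∏ i : {i : Fin n // i ∈ I}, g J' i.1 (y i))
        ≤ marginal Pd I y := by
      intro y
      rw [hmarg I y]
      apply mul_le_mul_of_nonneg_left _ (inv_nonneg.2 hm0.le)
      calc δ J' * ∏ i : {i : Fin n // i ∈ I}, g J' i.1 (y i)
          ≤ (1 - δ J') * (∏ i : {i : Fin n // i ∈ I}, g ∅ i.1 (y i)) +
            δ J' * ∏ i : {i : Fin n // i ∈ I}, g J' i.1 (y i) := by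
            have h1 : (0:ℝ) ≤ 1 - δ J' := by have := hδ1 J' (hLcard J' hJ'); linarith
            nlinarith [hRnn ∅ y, mul_nonneg h1 (hRnn ∅ y)]
        _ ≤ ∑ J ∈ L, ((1 - δ J) * (∏ i : {i : Fin n // i ∈ I}, g ∅ i.1 (y i)) +
              δ J * ∏ i : {i : Fin n // i ∈ I}, g J i.1 (y i)) := by
            apply Finset.single_le_sum _ hJ'
            intro J hJ
            have h1 : (0:ℝ) ≤ 1 - δ J := by have := hδ1 J (hLcard J hJ); linarith
            exact add_nonneg (mul_nonneg h1 (hRnn ∅ y)) (mul_nonneg (hδ0 J).le (hRnn J y))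
    calc mR⁻¹ ^ α * ((δ J') ^ α * (M:ℝ) ^ ((1 - α) * (((I ∩ J').card : ℕ) : ℝ)))
        = ∑ y : ∀ i : {i : Fin n // i ∈ I}, Fin M,
            (mR⁻¹ * (δ J' * ∏ i : {i : Fin n // i ∈ I}, g J' i.1 (y i))) ^ α := by
          have heq : ∀ y : ∀ i : {i : Fin n // i ∈ I}, Fin M,
              (mR⁻¹ * (δ J' * ∏ i : {i : Fin n // i ∈ I}, g J' i.1 (y i))) ^ α
              = mR⁻¹ ^ α * ((δ J') ^ α *
                  (∏ i : {i : Fin n // i ∈ I}, g J' i.1 (y i)) ^ α) := by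
            intro y
            rw [Real.mul_rpow (inv_nonneg.2 hm0.le) (mul_nonneg (hδ0 J').le (hRnn J' y)),
              Real.mul_rpow (hδ0 J').le (hRnn J' y)]
          simp_rw [heq]
          rw [← Finset.mul_sum, ← Finset.mul_sum, hRsum I J']
      _ ≤ ∑ y, marginal Pd I y ^ α := by
          apply Finset.sum_le_sum
          intro y _
          exact Real.rpow_le_rpow
            (mul_nonneg (inv_nonneg.2 hm0.le) (mul_nonneg (hδ0 J').le (hRnn J' y)))
            (hstep y) hα0.le
  have hTpos : ∀ I : Finset (Fin n), 0 < ∑ y, marginal Pd I y ^ α := by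
    intro I
    obtain ⟨J', hJ'⟩ := hLne
    refine lt_of_lt_of_le ?_ (hTlb I J' hJ')
    have := Real.rpow_pos_of_pos hm0 α
    have := Real.rpow_pos_of_pos (hδ0 J') α
    have := Real.rpow_pos_of_pos hMR0 ((1 - α) * (((I ∩ J').card : ℕ) : ℝ))
    positivity
  refine ⟨fun _ => M, Pd, ⟨hPnn, hPsum⟩, ?_, ?_⟩
  · -- I ∈ U
    intro I hI
    rw [show ((L.card : ℕ) : ℝ) = mR from hmR.symm]
    obtain ⟨J0, hJ0L, hJ0I⟩ := hmin I hI
    have hren : renyiH α (marginal Pd I)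
        = (1 / (1 - α)) * Real.logb 2 (∑ y, marginal Pd I y ^ α) := rfl
    have hTlow : (2:ℝ) ^ ((1 - α) * s) ≤ ∑ y, marginal Pd I y ^ α := by
      have h := hTlb I J0 hJ0L
      rw [Finset.inter_eq_right.2 hJ0I, hkey J0 J0.card] at h
      have he : ((J0.card:ℝ) - (J0.card:ℝ) + 1) = 1 := by ring
      rw [he, mul_one, hεM] at h
      have hmV : mR⁻¹ ^ α * V = 2 ^ ((1 - α) * s) := by
        have hne : mR ^ α ≠ 0 := (Real.rpow_pos_of_pos hm0 α).ne'
        rw [hVdef, Real.inv_rpow hm0.le]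
        field_simp
      linarith [h, hmV.ge]
    have hTup : ∑ y, marginal Pd I y ^ α ≤ 2 ^ ((1 - α) * s) * (2 * mR) := by
      have h := hTub I
      have hterm : ∀ J ∈ L,
          1 + (δ J) ^ α * (M:ℝ) ^ ((1 - α) * (((I ∩ J).card : ℕ) : ℝ)) ≤ 2 * V := by
        intro J hJ
        have h1 := hδV J ((I ∩ J).card) (Finset.card_le_card (Finset.inter_subset_right))
        linarith
      have h2 : ∑ J ∈ L, (1 + (δ J) ^ α * (M:ℝ) ^ ((1 - α) * (((I ∩ J).card : ℕ) : ℝ)))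
          ≤ mR * (2 * V) := by
        calc ∑ J ∈ L, (1 + (δ J) ^ α * (M:ℝ) ^ ((1 - α) * (((I ∩ J).card : ℕ) : ℝ)))
            ≤ ∑ _J ∈ L, 2 * V := Finset.sum_le_sum hterm
          _ = mR * (2 * V) := by rw [Finset.sum_const, nsmul_eq_mul, hmR]
      have hinv : mR⁻¹ ^ α * mR ^ α = 1 := by
        rw [← Real.mul_rpow (inv_nonneg.2 hm0.le) hm0.le, inv_mul_cancel₀ hm0.ne',
          Real.one_rpow]
      calc ∑ y, marginal Pd I y ^ α
          ≤ mR⁻¹ ^ α * ∑ J ∈ L, (1 + (δ J) ^ α * (M:ℝ) ^ ((1 - α) * (((I ∩ J).card : ℕ) : ℝ))) := h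
        _ ≤ mR⁻¹ ^ α * (mR * (2 * V)) :=
            mul_le_mul_of_nonneg_left h2 (Real.rpow_nonneg (inv_nonneg.2 hm0.le) α)
        _ = (mR⁻¹ ^ α * mR ^ α) * (2 ^ ((1 - α) * s) * (2 * mR)) := by
            rw [hVdef]; ring
        _ = 2 ^ ((1 - α) * s) * (2 * mR) := by rw [hinv, one_mul]
    have hT0 : (0:ℝ) < ∑ y, marginal Pd I y ^ α := hTpos I
    constructor
    · rw [hren]
      have hlb : (1 - α) * s ≤ Real.logb 2 (∑ y, marginal Pd I y ^ α) := by
        calc (1 - α) * s = Real.logb 2 ((2:ℝ) ^ ((1 - α) * s)) :=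
              (Real.logb_rpow two_pos (by norm_num)).symm
          _ ≤ Real.logb 2 (∑ y, marginal Pd I y ^ α) :=
              Real.logb_le_logb_of_le one_lt_two (by positivity) hTlow
      calc s = (1 / (1 - α)) * ((1 - α) * s) := by field_simp
        _ ≤ (1 / (1 - α)) * Real.logb 2 (∑ y, marginal Pd I y ^ α) :=
            mul_le_mul_of_nonneg_left hlb (by positivity)
    · rw [hren]
      have hub : Real.logb 2 (∑ y, marginal Pd I y ^ α)
          ≤ (1 - α) * s + (1 + Real.logb 2 mR) := by
        have h1 : Real.logb 2 (∑ y, marginal Pd I y ^ α)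
            ≤ Real.logb 2 ((2:ℝ) ^ ((1 - α) * s) * (2 * mR)) :=
          Real.logb_le_logb_of_le one_lt_two hT0 hTup
        rw [Real.logb_mul (by positivity) (by positivity),
          Real.logb_mul (by norm_num) hm0.ne',
          Real.logb_rpow two_pos (by norm_num),
          Real.logb_self_eq_one one_lt_two] at h1
        linarith
      calc (1 / (1 - α)) * Real.logb 2 (∑ y, marginal Pd I y ^ α)
          ≤ (1 / (1 - α)) * ((1 - α) * s + (1 + Real.logb 2 mR)) :=
            mul_le_mul_of_nonneg_left hub (by positivity)
        _ = s + (Real.logb 2 mR + 1) / (1 - α) := by field_simp; ring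
  · -- I ∉ U
    intro I _ hIU
    rw [show ((L.card : ℕ) : ℝ) = mR from hmR.symm]
    have hren : renyiH α (marginal Pd I)
        = (1 / (1 - α)) * Real.logb 2 (∑ y, marginal Pd I y ^ α) := rfl
    have hknotin : ∀ J ∈ L, (I ∩ J).card + 1 ≤ J.card := by
      intro J hJ
      have hne : ¬ J ⊆ I := fun hsub => hIU (hUup J (hLU J hJ) I hsub)
      have hss : I ∩ J ⊂ J := by
        refine (Finset.inter_subset_right).ssubset_of_ne ?_
        intro heq
        exact hne (Finset.inter_eq_right.1 heq)
      exact Finset.card_lt_card hss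
    have hTup : ∑ y, marginal Pd I y ^ α ≤ (2 * mR) ^ (1 - α) := by
      have h := hTub I
      have hterm : ∀ J ∈ L,
          1 + (δ J) ^ α * (M:ℝ) ^ ((1 - α) * (((I ∩ J).card : ℕ) : ℝ)) ≤ 2 ^ (1 - α) := by
        intro J hJ
        have h1 := hδε J ((I ∩ J).card) (hknotin J hJ)
        have : (1:ℝ) + ε ≤ 2 ^ (1 - α) := by rw [hcdef] at hεc; linarith
        linarith
      have h2 : ∑ J ∈ L, (1 + (δ J) ^ α * (M:ℝ) ^ ((1 - α) * (((I ∩ J).card : ℕ) : ℝ)))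
          ≤ mR * 2 ^ (1 - α) := by
        calc ∑ J ∈ L, (1 + (δ J) ^ α * (M:ℝ) ^ ((1 - α) * (((I ∩ J).card : ℕ) : ℝ)))
            ≤ ∑ _J ∈ L, (2:ℝ) ^ (1 - α) := Finset.sum_le_sum hterm
          _ = mR * 2 ^ (1 - α) := by rw [Finset.sum_const, nsmul_eq_mul, hmR]
      have hkey2 : mR⁻¹ ^ α * (mR * 2 ^ (1 - α)) = (2 * mR) ^ (1 - α) := by
        rw [Real.mul_rpow (by norm_num : (0:ℝ) ≤ 2) hm0.le]
        have h3 : mR⁻¹ ^ α * mR = mR ^ (1 - α) := by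
          rw [Real.inv_rpow hm0.le, Real.rpow_sub hm0, Real.rpow_one, div_eq_mul_inv]
          ring
        calc mR⁻¹ ^ α * (mR * 2 ^ (1 - α)) = (mR⁻¹ ^ α * mR) * 2 ^ (1 - α) := by ring
          _ = mR ^ (1 - α) * 2 ^ (1 - α) := by rw [h3]
          _ = 2 ^ (1 - α) * mR ^ (1 - α) := by ring
      calc ∑ y, marginal Pd I y ^ α
          ≤ mR⁻¹ ^ α * ∑ J ∈ L, (1 + (δ J) ^ α * (M:ℝ) ^ ((1 - α) * (((I ∩ J).card : ℕ) : ℝ))) := h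
        _ ≤ mR⁻¹ ^ α * (mR * 2 ^ (1 - α)) :=
            mul_le_mul_of_nonneg_left h2 (Real.rpow_nonneg (inv_nonneg.2 hm0.le) α)
        _ = (2 * mR) ^ (1 - α) := hkey2
    have hT0 : (0:ℝ) < ∑ y, marginal Pd I y ^ α := hTpos I
    rw [hren]
    have hub : Real.logb 2 (∑ y, marginal Pd I y ^ α) ≤ (1 - α) * Real.logb 2 (2 * mR) := by
      have h1 : Real.logb 2 (∑ y, marginal Pd I y ^ α)
          ≤ Real.logb 2 ((2 * mR) ^ (1 - α)) :=
        Real.logb_le_logb_of_le one_lt_two hT0 hTup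
      rwa [Real.logb_rpow_eq_mul_logb_of_pos (by positivity)] at h1
    have hsplit : Real.logb 2 (2 * mR) = 1 + Real.logb 2 mR := by
      rw [Real.logb_mul (by norm_num) hm0.ne', Real.logb_self_eq_one one_lt_two]
    calc (1 / (1 - α)) * Real.logb 2 (∑ y, marginal Pd I y ^ α)
        ≤ (1 / (1 - α)) * ((1 - α) * Real.logb 2 (2 * mR)) :=
          mul_le_mul_of_nonneg_left hub (by positivity)
      _ = Real.logb 2 (2 * mR) := by field_simp
      _ = Real.logb 2 mR + 1 := by rw [hsplit]; ring

end
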